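/- Let Φ : B(H) → B(H) be a quantum channel on a finite-dimensional Hilbert space H and let {φ_i}_{i∈I} be a family of unit vectors in H whose associated family of pure states is orthogonally non-decomposable (there is no proper nonzero subspace H_0 of H such that every φ_i lies either in H_0 or in its orthogonal complement). If Φ(|φ_i⟩⟨φ_i|) = |φ_i⟩⟨φ_i| for all i, then Φ restricted to operators supported on the subspace H_0 generated by {φ_i} is the identity map: Φ(ρ) = ρ for all ρ with support in H_0. -/

import Mathlib

open Matrix
open scoped ComplexOrder
noncomputable section

abbrev Mat (n : ℕ) := Matrix (Fin n) (Fin n) ℂ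

/-- Complete positivity of a linear map between matrix algebras:
all ampliations `id_k ⊗ Φ` map positive semidefinite matrices to positive
semidefinite matrices. -/
def IsCP {m n : Type*} [Fintype m] [Fintype n]
    (Φ : Matrix m m ℂ →ₗ[ℂ] Matrix n n ℂ) : Prop :=
  ∀ (k : ℕ) (M : Matrix (Fin k × m) (Fin k × m) ℂ), M.PosSemidef →
    (Matrix.of fun p q : Fin k × n =>
      Φ (Matrix.of fun a b => M (p.1, a) (q.1, b)) p.2 q.2).PosSemidef

/-- Quantum channel: completely positive and trace preserving. -/
def IsChannel {m n : Type*} [Fintype m] [Fintype n]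
    (Φ : Matrix m m ℂ →ₗ[ℂ] Matrix n n ℂ) : Prop :=
  IsCP Φ ∧ ∀ ρ : Matrix m m ℂ, (Φ ρ).trace = ρ.trace

/-- A quantum state: positive semidefinite matrix of unit trace. -/
def IsState {n : Type*} [Fintype n] (ρ : Matrix n n ℂ) : Prop :=
  ρ.PosSemidef ∧ ρ.trace = 1

/-- Functional-calculus logarithm of a Hermitian matrix (with log 0 = 0 on the kernel). -/
def matLog {n : ℕ} (A : Mat n) : Mat n :=
  if h : A.IsHermitian then
    (h.eigenvectorUnitary : Mat n) *
      Matrix.diagonal (fun i => (Real.log (h.eigenvalues i) : ℂ)) *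
      (star (h.eigenvectorUnitary : Mat n))
  else 0

/-- Quantum relative entropy  H(ρ‖σ) = Tr ρ (log ρ − log σ). -/
def relEntropy {n : ℕ} (ρ σ : Mat n) : ℝ :=
  ((ρ * (matLog ρ - matLog σ)).trace).re

/-- von Neumann entropy. -/
def vnEntropy {n : Type*} [Fintype n] [DecidableEq n] (ρ : Matrix n n ℂ) : ℝ :=
  if h : ρ.IsHermitian then -∑ i, (h.eigenvalues i) * Real.log (h.eigenvalues i) else 0

/-- Partial trace over the second factor. -/
def ptrSnd {m k : Type*} [Fintype k] (M : Matrix (m × k) (m × k) ℂ) : Matrix m m ℂ :=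
  Matrix.of fun a a' => ∑ b, M (a, b) (a', b)

/-- Partial trace over the first factor. -/
def ptrFst {m k : Type*} [Fintype m] (M : Matrix (m × k) (m × k) ℂ) : Matrix k k ℂ :=
  Matrix.of fun b b' => ∑ a, M (a, b) (a, b')


/-- A family of vectors is orthogonally non-decomposable (subspace form): there is
no proper nonzero subspace `H₀` such that every vector of the family lies in `H₀`
or in its orthogonal complement. -/
private lemma kraus {n : ℕ} (Φ : Mat n →ₗ[ℂ] Mat n) (hCP : IsCP Φ) :
    ∃ K : Fin n × Fin n → Mat n, ∀ ρ, Φ ρ = ∑ j, K j * ρ * (K j)ᴴ := by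
  classical
  set ω : Fin n × Fin n → ℂ := fun p => if p.1 = p.2 then 1 else 0 with hω
  have hM : (Matrix.vecMulVec ω (star ω)).PosSemidef := by
    rw [Matrix.vecMulVec_eq (Fin 1), ← Matrix.conjTranspose_replicateCol]
    exact Matrix.posSemidef_self_mul_conjTranspose _
  have hC := hCP n _ hM
  set C : Matrix (Fin n × Fin n) (Fin n × Fin n) ℂ :=
    Matrix.of fun p q : Fin n × Fin n =>
      Φ (Matrix.of fun a b => Matrix.vecMulVec ω (star ω) (p.1, a) (q.1, b)) p.2 q.2 with hCdef
  have hCstd : ∀ p q : Fin n × Fin n,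
      C p q = Φ (Matrix.single p.1 q.1 1) p.2 q.2 := by
    intro p q
    have : (Matrix.of fun a b => Matrix.vecMulVec ω (star ω) (p.1, a) (q.1, b))
        = Matrix.single p.1 q.1 (1 : ℂ) := by
      ext a b
      simp only [Matrix.of_apply, Matrix.vecMulVec_apply, hω, Pi.star_apply,
        Matrix.single, Matrix.of_apply]
      by_cases h1 : p.1 = a <;> by_cases h2 : q.1 = b <;> simp [h1, h2]
    rw [hCdef]; simp only [Matrix.of_apply, this]
  open scoped MatrixOrder in
  set S := CFC.sqrt C with hS
  open scoped MatrixOrder in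
  have hSq : S * S = C := CFC.sqrt_mul_sqrt_self C hC.nonneg
  open scoped MatrixOrder in
  have hSH : Sᴴ = S := (CFC.sqrt_nonneg C).posSemidef.1
  have hCsum : ∀ x y, C x y = ∑ j, S x j * star (S y j) := by
    intro x y
    rw [← hSq]
    simp only [Matrix.mul_apply]
    refine Finset.sum_congr rfl fun j _ => ?_
    congr 1
    rw [← Matrix.conjTranspose_apply S, hSH]
  refine ⟨fun j => Matrix.of fun p a => S (a, p) j, fun ρ => ?_⟩
  have hρ : Φ ρ = ∑ a, ∑ b, ρ a b • Φ (Matrix.single a b 1) := by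
    conv_lhs => rw [Matrix.matrix_eq_sum_single ρ]
    rw [map_sum]
    refine Finset.sum_congr rfl fun a _ => ?_
    rw [map_sum]
    refine Finset.sum_congr rfl fun b _ => ?_
    rw [← _root_.map_smul]
    congr 1
    rw [Matrix.smul_single, smul_eq_mul, mul_one]
  ext p q
  rw [hρ]
  simp only [Matrix.sum_apply, Matrix.smul_apply, smul_eq_mul]
  have : ∀ a b, Φ (Matrix.single a b 1) p q = C (a, p) (b, q) := by
    intro a b; rw [hCstd (a,p) (b,q)]
  calc ∑ a, ∑ b, ρ a b * Φ (Matrix.single a b 1) p q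
      = ∑ a, ∑ b, ∑ j, ρ a b * (S (a,p) j * star (S (b,q) j)) := by
        refine Finset.sum_congr rfl fun a _ => Finset.sum_congr rfl fun b _ => ?_
        rw [this, hCsum, Finset.mul_sum]
    _ = ∑ a, ∑ j, ∑ b, ρ a b * (S (a,p) j * star (S (b,q) j)) :=
        Finset.sum_congr rfl fun a _ => Finset.sum_comm
    _ = ∑ j, ∑ a, ∑ b, ρ a b * (S (a,p) j * star (S (b,q) j)) := Finset.sum_comm
    _ = _ := by
        simp only [Matrix.sum_apply, Matrix.mul_apply, Matrix.conjTranspose_apply,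
          Matrix.of_apply, Finset.sum_mul]
        refine Finset.sum_congr rfl fun j _ => ?_
        rw [Finset.sum_comm]
        refine Finset.sum_congr rfl fun a _ => Finset.sum_congr rfl fun b _ => ?_
        ring

private lemma sum_mulVec' {n : ℕ} {J : Type*} [Fintype J] (M : J → Mat n) (x : Fin n → ℂ) :
    (∑ j, M j) *ᵥ x = ∑ j, (M j) *ᵥ x := by
  ext i
  simp only [Matrix.mulVec, dotProduct, Matrix.sum_apply, Finset.sum_mul,
    Finset.sum_apply]
  exact Finset.sum_comm

private lemma dotProduct_sum' {n : ℕ} {J : Type*} [Fintype J] (v : Fin n → ℂ) (w : J → Fin n → ℂ) :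
    v ⬝ᵥ (∑ j, w j) = ∑ j, v ⬝ᵥ w j := by
  simp only [dotProduct, Finset.sum_apply, Finset.mul_sum]
  exact Finset.sum_comm

private lemma kraus_tp {n : ℕ} (Φ : Mat n →ₗ[ℂ] Mat n)
    (K : Fin n × Fin n → Mat n) (hK : ∀ ρ, Φ ρ = ∑ j, K j * ρ * (K j)ᴴ)
    (hTP : ∀ ρ : Mat n, (Φ ρ).trace = ρ.trace) :
    ∑ j, (K j)ᴴ * K j = 1 := by
  classical
  ext b a
  have h := hTP (Matrix.single a b 1)
  rw [hK] at h
  have htr : ∀ M : Mat n, (M * Matrix.single a b 1).trace = M b a := by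
    intro M
    simp [Matrix.trace, Matrix.diag, Matrix.mul_apply, Matrix.single,
      Matrix.of_apply, ite_and, Finset.sum_ite_eq, Finset.sum_ite_eq', eq_comm]
  have h1 : (∑ j, K j * Matrix.single a b 1 * (K j)ᴴ).trace
      = ((∑ j, (K j)ᴴ * K j) * Matrix.single a b 1).trace := by
    rw [Matrix.trace_sum, Finset.sum_mul, Matrix.trace_sum]
    exact Finset.sum_congr rfl fun j _ => by rw [Matrix.trace_mul_cycle]
  rw [h1, htr] at h
  rw [h, ← htr 1, Matrix.one_mul]

private lemma conj_outer {n : ℕ} (A : Mat n) (v : Fin n → ℂ) :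
    A * Matrix.vecMulVec v (star v) * Aᴴ
      = Matrix.vecMulVec (A.mulVec v) (star (A.mulVec v)) := by
  ext p q
  simp only [Matrix.mul_apply, Matrix.vecMulVec_apply, Pi.star_apply, Matrix.mulVec,
    dotProduct, Matrix.conjTranspose_apply, star_sum, star_mul', star_star,
    Finset.sum_mul, Finset.mul_sum]
  refine Finset.sum_congr rfl fun x _ => Finset.sum_congr rfl fun y _ => ?_
  ring

private lemma eigvec_of_fixed_pure {n : ℕ} {J : Type*} [Fintype J] (K : J → Mat n) (φ : Fin n → ℂ)
    (hu : star φ ⬝ᵥ φ = 1)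
    (hfix : ∑ j, Matrix.vecMulVec ((K j).mulVec φ) (star ((K j).mulVec φ))
        = Matrix.vecMulVec φ (star φ)) :
    ∀ j, (K j).mulVec φ = (star φ ⬝ᵥ (K j).mulVec φ) • φ := by
  classical
  have hform : ∀ v x : Fin n → ℂ,
      star x ⬝ᵥ ((Matrix.vecMulVec v (star v)) *ᵥ x) = star (star v ⬝ᵥ x) * (star v ⬝ᵥ x) := by
    intro v x
    simp only [Matrix.vecMulVec_apply, Matrix.mulVec, dotProduct, Pi.star_apply,
      Finset.mul_sum, Finset.sum_mul, star_sum, star_mul', star_star]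
    rw [Finset.sum_comm]
    refine Finset.sum_congr rfl fun i _ => Finset.sum_congr rfl fun k _ => ?_
    ring
  have key : ∀ x : Fin n → ℂ, star φ ⬝ᵥ x = 0 →
      ∀ j, star ((K j).mulVec φ) ⬝ᵥ x = 0 := by
    intro x hx j
    have happ := congrArg (fun M : Mat n => dotProduct (star x) (M.mulVec x)) hfix
    simp only [sum_mulVec'] at happ
    rw [dotProduct_sum'] at happ
    have hsum : ∑ j, star (star ((K j).mulVec φ) ⬝ᵥ x) * (star ((K j).mulVec φ) ⬝ᵥ x) = 0 := by
      rw [← Finset.sum_congr rfl fun j (_ : j ∈ Finset.univ) => hform ((K j).mulVec φ) x]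
      rw [happ, hform, hx]
      simp
    have hterm := (Finset.sum_eq_zero_iff_of_nonneg
      (fun j _ => star_mul_self_nonneg (star ((K j).mulVec φ) ⬝ᵥ x))).mp hsum j (Finset.mem_univ j)
    set z := star ((K j).mulVec φ) ⬝ᵥ x with hz
    have : (Complex.normSq z : ℂ) = 0 := by
      rw [Complex.normSq_eq_conj_mul_self]
      exact hterm
    have := Complex.ofReal_eq_zero.mp this
    exact Complex.normSq_eq_zero.mp this
  intro j
  set c := star φ ⬝ᵥ (K j).mulVec φ with hc
  have hx : star φ ⬝ᵥ ((K j).mulVec φ - c • φ) = 0 := by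
    rw [dotProduct_sub, dotProduct_smul, hu]
    simp [hc]
  have h1 := key _ hx j
  have h2 : star ((K j).mulVec φ - c • φ) ⬝ᵥ ((K j).mulVec φ - c • φ) = 0 := by
    rw [star_sub, sub_dotProduct, h1, star_smul, smul_dotProduct, hx]
    simp
  exact sub_eq_zero.mp (dotProduct_star_self_eq_zero.mp h2)

def OrthNonDecomposable {n : ℕ} {I : Type*} (φ : I → (Fin n → ℂ)) : Prop :=
  ¬ ∃ H₀ : Submodule ℂ (Fin n → ℂ), H₀ ≠ ⊥ ∧ H₀ ≠ ⊤ ∧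
      ∀ i, φ i ∈ H₀ ∨ (∀ y ∈ H₀, star y ⬝ᵥ φ i = 0)

private lemma main_aux
    {n : ℕ} {I : Type*} [Nonempty I]
    (Φ : Mat n →ₗ[ℂ] Mat n)
    (K : Fin n × Fin n → Mat n) (hK : ∀ ρ, Φ ρ = ∑ j, K j * ρ * (K j)ᴴ)
    (hsum1 : ∑ j, (K j)ᴴ * K j = 1)
    (φ : I → (Fin n → ℂ)) (hunit : ∀ i, star (φ i) ⬝ᵥ φ i = 1)
    (hOND : OrthNonDecomposable φ)
    (hfix : ∀ i, Φ (Matrix.vecMulVec (φ i) (star (φ i)))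
              = Matrix.vecMulVec (φ i) (star (φ i))) :
    ∀ ρ : Mat n, Φ ρ = ρ := by
  classical
  obtain ⟨i₀⟩ := ‹Nonempty I›
  -- eigenvectors
  have heig : ∀ i j, (K j).mulVec (φ i) = (star (φ i) ⬝ᵥ (K j).mulVec (φ i)) • φ i := by
    intro i
    refine eigvec_of_fixed_pure K (φ i) (hunit i) ?_
    have h := hfix i
    rw [hK] at h
    rw [← h]
    exact Finset.sum_congr rfl fun j _ => (conj_outer (K j) (φ i)).symm
  set lam : I → (Fin n × Fin n) → ℂ := fun i j => star (φ i) ⬝ᵥ (K j).mulVec (φ i) with hlam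
  -- key identity
  have key : ∀ i i', star (φ i') ⬝ᵥ φ i
      = (∑ j, star (lam i' j) * lam i j) * (star (φ i') ⬝ᵥ φ i) := by
    intro i i'
    calc star (φ i') ⬝ᵥ φ i = star (φ i') ⬝ᵥ ((1 : Mat n) *ᵥ φ i) := by
          rw [Matrix.one_mulVec]
      _ = ∑ j, star (φ i') ⬝ᵥ (((K j)ᴴ * K j) *ᵥ φ i) := by
          rw [← hsum1, sum_mulVec', dotProduct_sum']
      _ = ∑ j, star ((K j) *ᵥ φ i') ⬝ᵥ ((K j) *ᵥ φ i) := by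
          refine Finset.sum_congr rfl fun j _ => ?_
          rw [← Matrix.mulVec_mulVec, dotProduct_mulVec, ← Matrix.star_mulVec]
      _ = ∑ j, star (lam i' j • φ i') ⬝ᵥ (lam i j • φ i) := by
          refine Finset.sum_congr rfl fun j _ => ?_
          rw [← heig, ← heig]
      _ = (∑ j, star (lam i' j) * lam i j) * (star (φ i') ⬝ᵥ φ i) := by
          rw [Finset.sum_mul]
          refine Finset.sum_congr rfl fun j _ => ?_
          rw [star_smul, smul_dotProduct, dotProduct_smul]
          simp only [smul_eq_mul]
          ring
  have hnorm : ∀ i, ∑ j, star (lam i j) * lam i j = 1 := by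
    intro i
    have h := key i i
    rw [hunit i, mul_one] at h
    exact h.symm
  -- dichotomy
  have dich : ∀ i i', star (φ i') ⬝ᵥ φ i ≠ 0 → lam i = lam i' := by
    intro i i' ht
    have hs : (∑ j, star (lam i' j) * lam i j) = 1 := by
      have h := key i i'
      have h2 : (∑ j, star (lam i' j) * lam i j) * (star (φ i') ⬝ᵥ φ i)
          = 1 * (star (φ i') ⬝ᵥ φ i) := by rw [one_mul, ← h]
      exact mul_right_cancel₀ ht h2
    have hs' : (∑ j, star (lam i j) * lam i' j) = 1 := by
      have := congrArg star hs
      rw [star_sum] at this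
      simp only [star_mul', star_star] at this
      rw [star_one] at this
      rw [← this]
      exact Finset.sum_congr rfl fun j _ => mul_comm _ _
    have hzero : ∑ j, star (lam i j - lam i' j) * (lam i j - lam i' j) = 0 := by
      have expand : ∀ j : Fin n × Fin n, star (lam i j - lam i' j) * (lam i j - lam i' j)
          = star (lam i j) * lam i j - star (lam i' j) * lam i j
            - star (lam i j) * lam i' j + star (lam i' j) * lam i' j := by
        intro j; rw [star_sub]; ring
      rw [Finset.sum_congr rfl fun j _ => expand j]
      simp only [Finset.sum_add_distrib, Finset.sum_sub_distrib]
      rw [hnorm i, hnorm i', hs, hs']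
      ring
    funext j
    have hterm := (Finset.sum_eq_zero_iff_of_nonneg
      (fun j _ => star_mul_self_nonneg (lam i j - lam i' j))).mp hzero j (Finset.mem_univ j)
    have : (Complex.normSq (lam i j - lam i' j) : ℂ) = 0 := by
      rw [Complex.normSq_eq_conj_mul_self]; exact hterm
    have := Complex.normSq_eq_zero.mp (Complex.ofReal_eq_zero.mp this)
    exact sub_eq_zero.mp this
  have hphine : ∀ i : I, φ i ≠ 0 := by
    intro i h
    have := hunit i
    rw [h] at this
    simp [dotProduct] at this
  -- all lam equal
  have hall : ∀ i, lam i = lam i₀ := by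
    by_contra hne
    push_neg at hne
    obtain ⟨i₁, hi₁⟩ := hne
    set H₀ : Submodule ℂ (Fin n → ℂ) :=
      Submodule.span ℂ (φ '' {i | lam i = lam i₀}) with hH₀
    have horth : ∀ i : I, lam i ≠ lam i₀ → ∀ y ∈ H₀, star y ⬝ᵥ φ i = 0 := by
      intro i hli y hy
      induction hy using Submodule.span_induction with
      | mem x hx =>
          obtain ⟨i', hl', rfl⟩ := hx
          by_contra hne0
          exact hli ((dich i i' hne0).trans hl')
      | zero => simp
      | add x y hx hy ihx ihy => rw [star_add, add_dotProduct, ihx, ihy, add_zero]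
      | smul a x hx ihx => rw [star_smul, smul_dotProduct, ihx, smul_zero]
    have hbot : H₀ ≠ ⊥ := by
      intro hb
      have : φ i₀ ∈ H₀ := Submodule.subset_span ⟨i₀, rfl, rfl⟩
      rw [hb, Submodule.mem_bot] at this
      exact hphine i₀ this
    have hprop : ∀ i, φ i ∈ H₀ ∨ (∀ y ∈ H₀, star y ⬝ᵥ φ i = 0) := by
      intro i
      by_cases hli : lam i = lam i₀
      · exact Or.inl (Submodule.subset_span ⟨i, hli, rfl⟩)
      · exact Or.inr (horth i hli)
    have htop : H₀ = ⊤ := by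
      by_contra hnt
      exact hOND ⟨H₀, hbot, hnt, hprop⟩
    have := horth i₁ hi₁ (φ i₁) (htop ▸ Submodule.mem_top)
    rw [hunit i₁] at this
    exact one_ne_zero this
  -- span of φ is everything
  have hspan : Submodule.span ℂ (Set.range φ) = ⊤ := by
    by_contra hnt
    refine hOND ⟨Submodule.span ℂ (Set.range φ), ?_, hnt,
      fun i => Or.inl (Submodule.subset_span (Set.mem_range_self i))⟩
    intro hb
    have : φ i₀ ∈ Submodule.span ℂ (Set.range φ) :=
      Submodule.subset_span (Set.mem_range_self i₀)
    rw [hb, Submodule.mem_bot] at this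
    exact hphine i₀ this
  -- each K j is a scalar
  set μ : Fin n × Fin n → ℂ := lam i₀ with hμ
  have hKs : ∀ j, K j = μ j • (1 : Mat n) := by
    intro j
    have hvec : ∀ x, (K j) *ᵥ x = μ j • x := by
      intro x
      have hx : x ∈ Submodule.span ℂ (Set.range φ) := hspan ▸ Submodule.mem_top
      induction hx using Submodule.span_induction with
      | mem v hv =>
          obtain ⟨i, rfl⟩ := hv
          rw [heig i j]
          have : lam i j = μ j := by rw [← hall i]
          rw [show star (φ i) ⬝ᵥ K j *ᵥ φ i = lam i j from rfl, this]
      | zero => rw [Matrix.mulVec_zero, smul_zero]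
      | add x y hx hy ihx ihy => rw [Matrix.mulVec_add, ihx, ihy, smul_add]
      | smul a x hx ihx => rw [Matrix.mulVec_smul, ihx, smul_comm]
    ext a b
    have h := congrFun (hvec (Pi.single b 1)) a
    rw [Matrix.mulVec_single_one] at h
    simp only [Matrix.col_apply] at h
    rw [h]
    simp [Matrix.one_apply, Pi.single_apply, Matrix.smul_apply]
  -- conclude
  intro ρ
  rw [hK]
  have : ∀ j : Fin n × Fin n, K j * ρ * (K j)ᴴ = (star (μ j) * μ j) • ρ := by
    intro j
    rw [hKs j, Matrix.conjTranspose_smul, Matrix.conjTranspose_one,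
      Matrix.smul_mul, Matrix.one_mul, Matrix.mul_smul, Matrix.mul_one,
      smul_smul, mul_comm]
  rw [Finset.sum_congr rfl fun j _ => this j, ← Finset.sum_smul, hnorm i₀, one_smul]

/-- If a channel fixes an orthogonally non-decomposable family of pure
states, it is the identity on operators supported on the span of the family. -/
theorem channel_fixing_OND_family_is_identity_on_span
    {n : ℕ} {I : Type*}
    (Φ : Mat n →ₗ[ℂ] Mat n) (hΦ : IsChannel Φ)
    (φ : I → (Fin n → ℂ)) (hunit : ∀ i, star (φ i) ⬝ᵥ φ i = 1)
    (hOND : OrthNonDecomposable φ)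
    (hfix : ∀ i, Φ (Matrix.vecMulVec (φ i) (star (φ i)))
              = Matrix.vecMulVec (φ i) (star (φ i))) :
    ∀ ρ : Mat n,
      LinearMap.range ρ.mulVecLin ≤ Submodule.span ℂ (Set.range φ) →
      LinearMap.range (ρᴴ).mulVecLin ≤ Submodule.span ℂ (Set.range φ) →
      Φ ρ = ρ := by
  intro ρ hρ1 _hρ2
  rcases isEmpty_or_nonempty I with hI | hI
  · have hre : Set.range φ = ∅ := Set.range_eq_empty φ
    rw [hre, Submodule.span_empty] at hρ1
    have h0 : ρ.mulVecLin = 0 := (LinearMap.range_le_bot_iff _).mp hρ1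
    have hρ0 : ρ = 0 := by
      ext a b
      have h := congrFun (congrFun (congrArg DFunLike.coe h0) (Pi.single b 1)) a
      rw [Matrix.mulVecLin_apply, Matrix.mulVec_single] at h
      simpa using h
    rw [hρ0, map_zero]
  · obtain ⟨K, hK⟩ := kraus Φ hΦ.1
    have hsum1 := kraus_tp Φ K hK hΦ.2
    exact main_aux Φ K hK hsum1 φ hunit hOND hfix ρ


end
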